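/- The pseudo type vector (1,1,2,2) admits two pseudo linear configurations with different Hilbert functions: the standard one has Hilbert function (1,3,5,6,6,...), while a configuration of generically chosen points on the four lines consists of 6 points in general position and has Hilbert function (1,3,6,6,...). -/

import Mathlib

open MvPolynomial

noncomputable section

variable {k : Type} [Field k]

/-- The polynomial ring `k[x₀,x₁,x₂]`. -/
abbrev R3 (k : Type) [Field k] := MvPolynomial (Fin 3) k

/-- The ideal of polynomials vanishing on a set of affine representatives in `k³`. -/
def vIdeal (S : Set (Fin 3 → k)) : Ideal (R3 k) where
  carrier := {f | ∀ x ∈ S, eval x f = 0}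
  add_mem' := by intro a b ha hb x hx; simp [map_add, ha x hx, hb x hx]
  zero_mem' := by intro x _; simp
  smul_mem' := by intro c f hf x hx; simp [smul_eq_mul, map_mul, hf x hx]

/-- The (prime) ideal of the point of `ℙ²` with representative `p`. -/
def pointIdeal (p : Fin 3 → k) : Ideal (R3 k) := vIdeal {x | ∃ c : k, x = c • p}

/-- The radical (saturated) ideal of a finite set of points. -/
def radIdeal (X : Finset (Fin 3 → k)) : Ideal (R3 k) := ⨅ p ∈ X, pointIdeal p

/-- The saturated ideal of the first infinitesimal neighborhood (double point scheme). -/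
def dblIdeal (X : Finset (Fin 3 → k)) : Ideal (R3 k) := ⨅ p ∈ X, (pointIdeal p) ^ 2

/-- Hilbert function of `R/I` in degree `t`. -/
def hilb (I : Ideal (R3 k)) (t : ℕ) : ℕ :=
  Module.finrank k (homogeneousSubmodule (Fin 3) k t) -
    Module.finrank k ↥(Submodule.restrictScalars k I ⊓ homogeneousSubmodule (Fin 3) k t)

/-- Regularity of a zero-dimensional scheme: least `t > 0` with `Δ h_{R/I}(t) = 0`. -/
def regC (I : Ideal (R3 k)) : ℕ := sInf {t | 0 < t ∧ hilb I t = hilb I (t - 1)}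

/-- Two representatives give the same projective point. -/
def SameProj (p q : Fin 3 → k) : Prop := ∃ c : k, c ≠ 0 ∧ q = c • p

/-- A finite set of representatives of distinct points of `ℙ²`. -/
def GoodPoints (X : Finset (Fin 3 → k)) : Prop :=
  (∀ p ∈ X, p ≠ 0) ∧ ∀ p ∈ X, ∀ q ∈ X, p ≠ q → ¬ SameProj p q

/-- The point `q` lies on the line with normal vector `ℓ`. -/
def onLine (ℓ q : Fin 3 → k) : Prop := (∑ i, ℓ i * q i) = 0

/-- `t` distinct lines, no three concurrent: each line meets the others in distinct points. -/
def GenLines (t : ℕ) (ℓ : Fin t → (Fin 3 → k)) : Prop :=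
  (∀ i, ℓ i ≠ 0) ∧ (∀ i j, i ≠ j → ¬ SameProj (ℓ i) (ℓ j)) ∧
    ∀ i j l, i ≠ j → j ≠ l → i ≠ l →
      ∀ p : Fin 3 → k, p ≠ 0 → ¬ (onLine (ℓ i) p ∧ onLine (ℓ j) p ∧ onLine (ℓ l) p)

/-- `X` is (a set of representatives of) the `t.choose 2` pairwise intersection
points of the lines `ℓ`. -/
def IsIntersectionConfig (t : ℕ) (ℓ : Fin t → (Fin 3 → k)) (X : Finset (Fin 3 → k)) : Prop :=
  GoodPoints X ∧ X.card = t.choose 2 ∧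
    (∀ p ∈ X, ∃ i j, i ≠ j ∧ onLine (ℓ i) p ∧ onLine (ℓ j) p) ∧
    (∀ i j, i ≠ j → ∃ p ∈ X, onLine (ℓ i) p ∧ onLine (ℓ j) p)

/-- The linear form with coefficient vector `a`. -/
def linForm (a : Fin 3 → k) : R3 k := ∑ i, C (a i) * X i

/-- `F` is (up to scalar) a product of `d` lines, each meeting the remaining
lines in `d-1` distinct points. -/
def IsGeneralLineUnion (d : ℕ) (F : R3 k) : Prop :=
  ∃ (c : k) (ℓ : Fin d → (Fin 3 → k)), c ≠ 0 ∧ GenLines d ℓ ∧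
    F = C c * ∏ i, linForm (ℓ i)

/-- `p` is a singular point of the curve `F`. -/
def IsSing (F : R3 k) (p : Fin 3 → k) : Prop :=
  p ≠ 0 ∧ ∀ i, eval p (pderiv i F) = 0

/-- `p` is an ordinary double point (node) of `F`: singular, and the Hessian has rank 2. -/
def IsNode (F : R3 k) (p : Fin 3 → k) : Prop :=
  IsSing F p ∧ (Matrix.of fun i j => eval p (pderiv i (pderiv j F))).rank = 2

/-- `f` is homogeneous of degree `d`. -/
def IsHomog (f : R3 k) (d : ℕ) : Prop := f ∈ homogeneousSubmodule (Fin 3) k d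

/-- `I` is a homogeneous ideal. -/
def HomogIdeal (I : Ideal (R3 k)) : Prop :=
  ∀ f ∈ I, ∀ d, homogeneousComponent d f ∈ I

/-- `I` is saturated with respect to the irrelevant maximal ideal. -/
def IsSat (I : Ideal (R3 k)) : Prop :=
  ∀ f : R3 k, (∀ i : Fin 3, X i * f ∈ I) → f ∈ I

/-- `{F, G}` is a regular sequence on `R`. -/
def RegPair (F G : R3 k) : Prop :=
  F ≠ 0 ∧ ∀ a : R3 k, G * a ∈ Ideal.span {F} → a ∈ Ideal.span {F}

/-- `J` is obtained from `I` by a basic double link `J = G·I + (F)`. -/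
def BDLStep (I J : Ideal (R3 k)) : Prop :=
  ∃ (F G : R3 k) (d1 d2 : ℕ), F ∈ I ∧ IsHomog F d1 ∧ IsHomog G d2 ∧ RegPair F G ∧
    J = Ideal.span {G} * I ⊔ Ideal.span {F}

/-- The irrelevant maximal ideal `(x₀,x₁,x₂)`. -/
def mIdeal : Ideal (R3 k) := Ideal.span {X 0, X 1, X 2}

/-- `(g, M)` is a graded free resolution `0 → ⊕ R(-d2 j) → ⊕ R(-d1 i) → I → 0`:
the `g i` are homogeneous of degree `d1 i` and generate `I`, the syzygies among the
`g i` are exactly the `R`-combinations of the columns of the homogeneous matrix `M`,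
and the columns of `M` are independent. -/
def GFRes (I : Ideal (R3 k)) {a b : ℕ} (d1 : Fin a → ℕ) (d2 : Fin b → ℕ)
    (g : Fin a → R3 k) (M : Fin a → Fin b → R3 k) : Prop :=
  (∀ i, IsHomog (g i) (d1 i)) ∧
  Ideal.span (Set.range g) = I ∧
  (∀ i j, M i j ≠ 0 → d1 i ≤ d2 j) ∧
  (∀ i j, IsHomog (M i j) (d2 j - d1 i)) ∧
  (∀ v : Fin a → R3 k, (∑ i, v i * g i = 0) ↔ ∃ c : Fin b → R3 k, ∀ i, v i = ∑ j, c j * M i j) ∧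
  (∀ c : Fin b → R3 k, (∀ i, ∑ j, c j * M i j = 0) → c = 0)

/-- The resolution with syzygy matrix `M` is minimal. -/
def MinRes {a b : ℕ} (M : Fin a → Fin b → R3 k) : Prop :=
  ∀ i j, constantCoeff (M i j) = 0

/-- A pseudo type vector `(m 0, …, m (p-1))`. -/
def IsPseudoType (p : ℕ) (m : ℕ → ℕ) : Prop :=
  (∀ i, i < p → 0 < m i) ∧ (∀ i, i + 1 < p → m i ≤ m (i + 1)) ∧
  (∀ i, i + 2 < p → m i = m (i + 1) → m (i + 1) < m (i + 2))

/-- Condition (*): between any two zero entries of `ΔT'` there is an entry `> 1`. -/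
def CondStar (p : ℕ) (m : ℕ → ℕ) : Prop :=
  ∀ i j, i + 1 < p → j + 1 < p → i < j → m i = m (i + 1) → m j = m (j + 1) →
    ∃ l, i + 2 ≤ l ∧ l ≤ j ∧ m (l - 1) + 2 ≤ m l

/-- The `i`-th summand (shifted by `p-1-i`) of the standard O-sequence of a pseudo
type vector, evaluated at `t`. -/
def sTerm (p : ℕ) (m : ℕ → ℕ) (i t : ℕ) : ℕ :=
  let prev : ℕ := if i = 0 then 0 else m (i - 1)
  let next : ℕ := if i + 1 < p then m (i + 1) else m i + 1
  let shift : ℕ := p - 1 - i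
  if m i = next then 0
  else if prev = m i then
    (if t = shift then 1 else if shift < t ∧ t < shift + m i then 2
     else if t = shift + m i then 1 else 0)
  else (if shift ≤ t ∧ t < shift + m i then 1 else 0)

/-- The standard O-sequence associated to a pseudo type vector. -/
def sOS (p : ℕ) (m : ℕ → ℕ) (t : ℕ) : ℕ := ∑ i ∈ Finset.range p, sTerm p m i t

/-- The standard Hilbert function associated to a pseudo type vector. -/
def SHF (p : ℕ) (m : ℕ → ℕ) (t : ℕ) : ℕ := ∑ j ∈ Finset.range (t + 1), sOS p m j

/-- A pseudo linear configuration of type `(m 0, …, m (p-1))` on the lines `ℓ`. -/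
def PseudoConfig (p : ℕ) (m : ℕ → ℕ) (ℓ : ℕ → (Fin 3 → k))
    (Xc : ℕ → Finset (Fin 3 → k)) : Prop :=
  (∀ i, i < p → ℓ i ≠ 0) ∧
  (∀ i j, i < p → j < p → i ≠ j → ¬ SameProj (ℓ i) (ℓ j)) ∧
  (∀ i, i < p → (Xc i).card = m i ∧ GoodPoints (Xc i)) ∧
  (∀ i, i < p → ∀ q ∈ Xc i, onLine (ℓ i) q) ∧
  (∀ i j, i < p → j < p → j ≠ i → ∀ q ∈ Xc i, ¬ onLine (ℓ j) q)

/-- The ideal of a pseudo linear configuration. -/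
def pcRad (p : ℕ) (Xc : ℕ → Finset (Fin 3 → k)) : Ideal (R3 k) :=
  ⨅ i ∈ Finset.range p, radIdeal (Xc i)

/-- A k-configuration of type `(n 0, …, n (r-1))` in `ℙ²`. -/
def KConfig (r : ℕ) (n : Fin r → ℕ) (ℓ : Fin r → (Fin 3 → k))
    (Xc : Fin r → Finset (Fin 3 → k)) : Prop :=
  (∀ i, ℓ i ≠ 0) ∧ (∀ i j, i ≠ j → ¬ SameProj (ℓ i) (ℓ j)) ∧
  (∀ i, (Xc i).card = n i ∧ GoodPoints (Xc i)) ∧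
  (∀ i, ∀ q ∈ Xc i, onLine (ℓ i) q) ∧
  (∀ i j : Fin r, j < i → ∀ q ∈ Xc j, ¬ onLine (ℓ i) q)

/-- A linear configuration of type `(n 0, …, n (r-1))` in `ℙ²`. -/
def LinearConfig (r : ℕ) (n : Fin r → ℕ) (ℓ : Fin r → (Fin 3 → k))
    (Xc : Fin r → Finset (Fin 3 → k)) : Prop :=
  (∀ i, ℓ i ≠ 0) ∧ (∀ i j, i ≠ j → ¬ SameProj (ℓ i) (ℓ j)) ∧
  (∀ i, (Xc i).card = n i ∧ GoodPoints (Xc i)) ∧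
  (∀ i, ∀ q ∈ Xc i, onLine (ℓ i) q) ∧
  (∀ i j, j ≠ i → ∀ q ∈ Xc i, ¬ onLine (ℓ j) q)

/-- The ideal of (the union of the points of) a configuration given by groups. -/
def lcRad {r : ℕ} (Xc : Fin r → Finset (Fin 3 → k)) : Ideal (R3 k) :=
  ⨅ i, radIdeal (Xc i)

/-- The ideal of the double points supported on a configuration given by groups. -/
def lcDbl {r : ℕ} (Xc : Fin r → Finset (Fin 3 → k)) : Ideal (R3 k) :=
  ⨅ i, dblIdeal (Xc i)

/-- Hilbert function of `d` points on a line (with value `0` in negative degrees). -/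
def hl (d : ℕ) (j : ℤ) : ℕ := if j < 0 then 0 else min (j.toNat + 1) d

/-- The Hilbert function associated to a 2-type vector `(n 0 < … < n (r-1))`:
`h(j) = h_r(j) + h_{r-1}(j-1) + ⋯ + h_1(j-(r-1))`. -/
def hT (r : ℕ) (n : Fin r → ℕ) (j : ℕ) : ℕ :=
  ∑ i : Fin r, hl (n i) ((j : ℤ) - ((r - 1 - (i : ℕ) : ℕ) : ℤ))

/-- The associated pseudo type vector of a 2-type vector, as a sorted list:
`(n₁, 2n₁, …, n_r, 2n_r)` in nondecreasing order. -/
def assocList (r : ℕ) (n : Fin r → ℕ) : List ℕ :=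
  List.insertionSort (· ≤ ·) (List.ofFn n ++ List.ofFn fun i => 2 * n i)

/-- The associated pseudo type vector as a function. -/
def assocPTV (r : ℕ) (n : Fin r → ℕ) : ℕ → ℕ := fun j => (assocList r n).getD j 0

section Stmt13Aux

open Module Submodule

lemma aux_degree_eq (d : Fin 3 →₀ ℕ) : d.degree = d 0 + d 1 + d 2 := by
  have : d.degree = ∑ i : Fin 3, d i := by
    rw [Finsupp.degree]
    refine Finset.sum_subset (Finset.subset_univ _) ?_
    intro x _ hx
    exact Finsupp.notMem_support_iff.mp hx
  rw [this, Fin.sum_univ_three]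

lemma aux_support_deg {f : R3 k} {t : ℕ} (hf : f ∈ homogeneousSubmodule (Fin 3) k t)
    {d : Fin 3 →₀ ℕ} (hd : d ∈ f.support) : d 0 + d 1 + d 2 = t := by
  have h1 := (mem_homogeneousSubmodule _ _).mp hf (MvPolynomial.mem_support_iff.mp hd)
  rw [← aux_degree_eq, Finsupp.degree_eq_weight_one]
  exact h1

lemma aux_eval_monomial3 (q : Fin 3 → k) (d : Fin 3 →₀ ℕ) (c : k) :
    eval q (monomial d c) = c * (q 0 ^ d 0 * (q 1 ^ d 1 * q 2 ^ d 2)) := by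
  rw [eval_monomial, Finsupp.prod_pow, Fin.prod_univ_three]
  ring

lemma aux_eval_smul_homog {f : R3 k} {t : ℕ}
    (hf : f ∈ homogeneousSubmodule (Fin 3) k t) (c : k) (x : Fin 3 → k) :
    eval (c • x) f = c ^ t * eval x f := by
  conv_lhs => rw [← support_sum_monomial_coeff f]
  conv_rhs => rw [← support_sum_monomial_coeff f]
  rw [map_sum, map_sum, Finset.mul_sum]
  refine Finset.sum_congr rfl fun d hd => ?_
  have hdeg := aux_support_deg hf hd
  rw [aux_eval_monomial3, aux_eval_monomial3]
  simp only [Pi.smul_apply, smul_eq_mul]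
  rw [mul_pow, mul_pow, mul_pow, ← hdeg]
  ring

lemma aux_mem_vIdeal {S : Set (Fin 3 → k)} {f : R3 k} :
    f ∈ vIdeal S ↔ ∀ x ∈ S, eval x f = 0 := Iff.rfl

lemma aux_mem_radIdeal_iff {S : Finset (Fin 3 → k)} {t : ℕ} {f : R3 k}
    (hf : f ∈ homogeneousSubmodule (Fin 3) k t) :
    f ∈ radIdeal S ↔ ∀ p ∈ S, eval p f = 0 := by
  simp only [radIdeal, Ideal.mem_iInf]
  constructor
  · intro h p hp
    exact (h p hp) p ⟨1, (one_smul _ _).symm⟩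
  · intro h p hp
    rintro x ⟨c, rfl⟩
    rw [aux_eval_smul_homog hf, h p hp, mul_zero]

instance aux_fd (t : ℕ) : FiniteDimensional k (homogeneousSubmodule (Fin 3) k t) := by
  refine Submodule.finiteDimensional_of_le (S₂ := restrictTotalDegree (Fin 3) k t) ?_
  intro f hf
  rw [mem_restrictTotalDegree]
  exact MvPolynomial.IsHomogeneous.totalDegree_le hf

/-- Evaluation at six points as a linear map on the degree-`t` part. -/
def evL (pts : Fin 6 → (Fin 3 → k)) (t : ℕ) :
    (homogeneousSubmodule (Fin 3) k t) →ₗ[k] (Fin 6 → k) where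
  toFun f := fun i => eval (pts i) (f : R3 k)
  map_add' f g := by funext i; simp
  map_smul' c f := by
    funext i
    simp [smul_eq_C_mul]

lemma evL_apply (pts : Fin 6 → (Fin 3 → k)) (t : ℕ)
    (f : homogeneousSubmodule (Fin 3) k t) (i : Fin 6) :
    evL pts t f i = eval (pts i) (f : R3 k) := rfl

lemma aux_hilb_eq (S : Finset (Fin 3 → k)) (pts : Fin 6 → (Fin 3 → k)) (t : ℕ)
    (hS : ∀ f : R3 k, (∀ p ∈ S, eval p f = 0) ↔ ∀ i, eval (pts i) f = 0) :
    hilb (radIdeal S) t = finrank k (LinearMap.range (evL pts t)) := by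
  have hker : LinearMap.ker (evL pts t) =
      Submodule.comap (homogeneousSubmodule (Fin 3) k t).subtype
        (Submodule.restrictScalars k (radIdeal S) ⊓ homogeneousSubmodule (Fin 3) k t) := by
    ext ⟨f, hf⟩
    simp only [LinearMap.mem_ker, Submodule.mem_comap, Submodule.coe_subtype,
      Submodule.mem_inf, Submodule.restrictScalars_mem]
    constructor
    · intro h
      refine ⟨(aux_mem_radIdeal_iff hf).mpr ?_, hf⟩
      rw [hS]
      intro i
      exact congrFun h i
    · intro h
      funext i
      exact ((hS f).mp ((aux_mem_radIdeal_iff hf).mp h.1)) i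
  have hmap : Submodule.map (homogeneousSubmodule (Fin 3) k t).subtype
      (LinearMap.ker (evL pts t)) =
      Submodule.restrictScalars k (radIdeal S) ⊓ homogeneousSubmodule (Fin 3) k t := by
    rw [hker, Submodule.map_comap_subtype]
    exact inf_eq_right.mpr inf_le_right
  have hrn := LinearMap.finrank_range_add_finrank_ker (evL pts t)
  unfold hilb
  rw [← hmap, Submodule.finrank_map_subtype_eq, ← hrn, Nat.add_sub_cancel]

lemma aux_surj_rank (pts : Fin 6 → (Fin 3 → k)) (t : ℕ)
    (h : Function.Surjective (evL pts t)) :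
    finrank k (LinearMap.range (evL pts t)) = 6 := by
  rw [LinearMap.range_eq_top.mpr h, finrank_top]
  simp

lemma aux_surj_of_diag (pts : Fin 6 → (Fin 3 → k)) (t : ℕ) (f : Fin 6 → R3 k)
    (hh : ∀ i, f i ∈ homogeneousSubmodule (Fin 3) k t)
    (hd : ∀ i j, i ≠ j → eval (pts j) (f i) = 0)
    (hnz : ∀ i, eval (pts i) (f i) ≠ 0) :
    Function.Surjective (evL pts t) := by
  intro w
  refine ⟨∑ i, (w i / eval (pts i) (f i)) • ⟨f i, hh i⟩, ?_⟩
  funext j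
  rw [map_sum]
  rw [Finset.sum_apply]
  rw [Finset.sum_eq_single j]
  · rw [map_smul, Pi.smul_apply, evL_apply, smul_eq_mul]
    exact div_mul_cancel₀ (w j) (hnz j)
  · intro i _ hij
    rw [map_smul, Pi.smul_apply, evL_apply, smul_eq_mul]
    rw [hd i j hij, mul_zero]
  · intro hj
    exact absurd (Finset.mem_univ j) hj

lemma aux_surj_step (pts : Fin 6 → (Fin 3 → k)) (t : ℕ) (hz : ∀ i, pts i 2 = 1)
    (h : Function.Surjective (evL pts t)) :
    Function.Surjective (evL pts (t + 1)) := by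
  intro w
  obtain ⟨f, hf⟩ := h w
  refine ⟨⟨(f : R3 k) * X 2, f.2.mul (isHomogeneous_X k 2)⟩, ?_⟩
  funext i
  rw [evL_apply]
  show eval (pts i) ((f : R3 k) * X 2) = w i
  rw [map_mul, eval_X, hz i, mul_one]
  exact congrFun hf i

lemma aux_range_le_span (pts : Fin 6 → (Fin 3 → k)) (t : ℕ) (p : Submodule k (Fin 6 → k))
    (h : ∀ d : Fin 3 →₀ ℕ, d 0 + d 1 + d 2 = t →
      (fun i => eval (pts i) (monomial d (1 : k))) ∈ p) :
    LinearMap.range (evL pts t) ≤ p := by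
  rintro - ⟨⟨f, hf⟩, rfl⟩
  have hsum : evL pts t ⟨f, hf⟩ =
      ∑ d ∈ f.support, coeff d f • fun i => eval (pts i) (monomial d (1 : k)) := by
    funext i
    rw [Finset.sum_apply]
    rw [evL_apply]
    show eval (pts i) f = _
    conv_lhs => rw [show f = ∑ d ∈ f.support, monomial d (coeff d f) from
      (support_sum_monomial_coeff f).symm]
    rw [map_sum]
    refine Finset.sum_congr rfl fun d _ => ?_
    rw [Pi.smul_apply, smul_eq_mul, aux_eval_monomial3, aux_eval_monomial3]
    ring
  rw [hsum]
  exact Submodule.sum_mem _ fun d hd => Submodule.smul_mem _ _ (h d (aux_support_deg hf hd))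

lemma aux_not_sameProj_coord {p q : Fin 3 → k} (i j : Fin 3) (hp : p i = 1) (hq : q i = 1)
    (hne : p j ≠ q j) : ¬ SameProj p q := by
  rintro ⟨c, hc, rfl⟩
  rw [Pi.smul_apply, smul_eq_mul, hp, mul_one] at hq
  exact hne (by rw [Pi.smul_apply, smul_eq_mul, hq, one_mul])

lemma aux_good_z1 {Xs : Finset (Fin 3 → k)} (h1 : ∀ p ∈ Xs, p 2 = 1) : GoodPoints Xs := by
  constructor
  · intro p hp h0
    have := h1 p hp
    rw [h0] at this
    simp at this
  · intro p hp q hq hne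
    rintro ⟨c, hc, rfl⟩
    have hc1 : c = 1 := by
      have h2 := h1 _ hq
      rw [Pi.smul_apply, smul_eq_mul, h1 p hp, mul_one] at h2
      exact h2
    exact hne (by rw [hc1, one_smul])

lemma aux_rank0 (pts : Fin 6 → Fin 3 → k) :
    finrank k (LinearMap.range (evL pts 0)) = 1 := by
  have hone : (fun _ => (1 : k) : Fin 6 → k) ∈ LinearMap.range (evL pts 0) := by
    refine ⟨⟨1, isHomogeneous_one (Fin 3) k⟩, ?_⟩
    funext i
    rw [evL_apply]
    exact map_one _
  have heq : LinearMap.range (evL pts 0) = Submodule.span k {(fun _ => (1:k) : Fin 6 → k)} := by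
    apply le_antisymm
    · apply aux_range_le_span
      intro d hd
      have h0 : d 0 = 0 := by omega
      have h1 : d 1 = 0 := by omega
      have h2 : d 2 = 0 := by omega
      have : (fun i => eval (pts i) (monomial d (1:k))) = fun _ => (1:k) := by
        funext i
        rw [aux_eval_monomial3, h0, h1, h2]
        ring
      rw [this]
      exact Submodule.subset_span rfl
    · rw [Submodule.span_le, Set.singleton_subset_iff]
      exact hone
  rw [heq, finrank_span_singleton]
  intro h
  have := congrFun h 0
  simp at this

lemma aux_range1 (pts : Fin 6 → Fin 3 → k) :
    LinearMap.range (evL pts 1) =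
      Submodule.span k (Set.range fun j : Fin 3 => fun i => pts i j) := by
  apply le_antisymm
  · apply aux_range_le_span
    intro d hd
    have hcase : (d 0 = 1 ∧ d 1 = 0 ∧ d 2 = 0) ∨ (d 0 = 0 ∧ d 1 = 1 ∧ d 2 = 0) ∨
        (d 0 = 0 ∧ d 1 = 0 ∧ d 2 = 1) := by omega
    rcases hcase with ⟨h0, h1, h2⟩ | ⟨h0, h1, h2⟩ | ⟨h0, h1, h2⟩ <;>
      [ (have : (fun i => eval (pts i) (monomial d (1:k))) = fun i => pts i 0 := by
          funext i; rw [aux_eval_monomial3, h0, h1, h2]; ring);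
        (have : (fun i => eval (pts i) (monomial d (1:k))) = fun i => pts i 1 := by
          funext i; rw [aux_eval_monomial3, h0, h1, h2]; ring);
        (have : (fun i => eval (pts i) (monomial d (1:k))) = fun i => pts i 2 := by
          funext i; rw [aux_eval_monomial3, h0, h1, h2]; ring)] <;>
      rw [this] <;>
      exact Submodule.subset_span ⟨_, rfl⟩
  · rw [Submodule.span_le]
    rintro - ⟨j, rfl⟩
    refine ⟨⟨X j, isHomogeneous_X k j⟩, ?_⟩
    funext i
    rw [evL_apply]
    exact eval_X j

section Configs

@[simp] lemma aux_cons_val_five {α : Type*} {m : ℕ} (x : α) (u : Fin (m + 5) → α) :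
    Matrix.vecCons x u 5 =
      Matrix.vecHead (Matrix.vecTail (Matrix.vecTail (Matrix.vecTail (Matrix.vecTail u)))) :=
  rfl

@[simp] lemma aux_vecHead_const {α : Type*} {n : ℕ} (a : α) :
    Matrix.vecHead (fun _ : Fin (n + 1) => a) = a := rfl

@[simp] lemma aux_vecTail_const {α : Type*} {n : ℕ} (a : α) :
    Matrix.vecTail (fun _ : Fin (n + 1) => a) = fun _ : Fin n => a := rfl

attribute [local simp] Matrix.cons_val_two Matrix.cons_val_three Matrix.cons_val_four

lemma aux_fin3 (P : Fin 3 → Prop) (h0 : P 0) (h1 : P 1) (h2 : P 2) : ∀ i, P i := by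
  intro i; fin_cases i; exacts [h0, h1, h2]

lemma aux_fin5 (P : Fin 5 → Prop) (h0 : P 0) (h1 : P 1) (h2 : P 2) (h3 : P 3) (h4 : P 4) :
    ∀ i, P i := by
  intro i; fin_cases i; exacts [h0, h1, h2, h3, h4]

lemma aux_fin6 (P : Fin 6 → Prop) (h0 : P 0) (h1 : P 1) (h2 : P 2) (h3 : P 3) (h4 : P 4)
    (h5 : P 5) : ∀ i, P i := by
  intro i; fin_cases i; exacts [h0, h1, h2, h3, h4, h5]

lemma aux_funext6 {f g : Fin 6 → k} (h0 : f 0 = g 0) (h1 : f 1 = g 1) (h2 : f 2 = g 2)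
    (h3 : f 3 = g 3) (h4 : f 4 = g 4) (h5 : f 5 = g 5) : f = g :=
  funext (aux_fin6 _ h0 h1 h2 h3 h4 h5)

variable [CharZero k] [DecidableEq k]

/-- The six standard points. -/
def ptsS : Fin 6 → Fin 3 → k :=
  ![![0, 3, 1], ![0, 2, 1], ![0, 1, 1], ![1, 1, 1], ![0, 0, 1], ![1, 0, 1]]

/-- The standard finset of points. -/
def SstdF : Finset (Fin 3 → k) :=
  {![(0 : k), 3, 1], ![(0 : k), 2, 1], ![(0 : k), 1, 1], ![(1 : k), 1, 1],
    ![(0 : k), 0, 1], ![(1 : k), 0, 1]}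

lemma ptsS_z : ∀ i, ptsS (k := k) i 2 = 1 := by
  refine aux_fin6 _ ?_ ?_ ?_ ?_ ?_ ?_ <;> rfl

lemma hS_S (f : R3 k) :
    (∀ p ∈ SstdF, eval p f = 0) ↔ ∀ i, eval (ptsS (k := k) i) f = 0 := by
  constructor
  · intro h
    refine aux_fin6 _ ?_ ?_ ?_ ?_ ?_ ?_ <;>
      exact h _ (by simp [SstdF, ptsS])
  · intro h p hp
    simp only [SstdF, Finset.mem_insert, Finset.mem_singleton] at hp
    rcases hp with rfl | rfl | rfl | rfl | rfl | rfl
    exacts [h 0, h 1, h 2, h 3, h 4, h 5]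

lemma rankS1 : finrank k (LinearMap.range (evL (ptsS (k := k)) 1)) = 3 := by
  rw [aux_range1]
  have hli : LinearIndependent k (fun j : Fin 3 => fun i => ptsS (k := k) i j) := by
    rw [Fintype.linearIndependent_iff]
    intro g hg
    have e0 := congrFun hg 0
    have e2 := congrFun hg 2
    have e3 := congrFun hg 3
    simp [ptsS, Fin.sum_univ_three] at e0 e2 e3
    refine aux_fin3 _ ?_ ?_ ?_
    · linear_combination -e2 + e3
    · linear_combination (1/2 : k) * e0 + (-1/2 : k) * e2
    · linear_combination (-1/2 : k) * e0 + (3/2 : k) * e2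
  have h := finrank_span_eq_card hli
  rw [h]
  simp

/-- The five independent degree-2 evaluation vectors for the standard points. -/
def US : Fin 5 → Fin 6 → k :=
  ![![0, 0, 0, 1, 0, 1], ![0, 0, 0, 1, 0, 0], ![9, 4, 1, 1, 0, 0],
    ![3, 2, 1, 1, 0, 0], ![1, 1, 1, 1, 1, 1]]

lemma rangeS2 : LinearMap.range (evL (ptsS (k := k)) 2) =
    Submodule.span k (Set.range (US (k := k))) := by
  apply le_antisymm
  · apply aux_range_le_span
    intro d hd
    have hcase : (d 0 = 2 ∧ d 1 = 0 ∧ d 2 = 0) ∨ (d 0 = 1 ∧ d 1 = 1 ∧ d 2 = 0) ∨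
        (d 0 = 1 ∧ d 1 = 0 ∧ d 2 = 1) ∨ (d 0 = 0 ∧ d 1 = 2 ∧ d 2 = 0) ∨
        (d 0 = 0 ∧ d 1 = 1 ∧ d 2 = 1) ∨ (d 0 = 0 ∧ d 1 = 0 ∧ d 2 = 2) := by omega
    rcases hcase with ⟨h0, h1, h2⟩ | ⟨h0, h1, h2⟩ | ⟨h0, h1, h2⟩ | ⟨h0, h1, h2⟩ |
      ⟨h0, h1, h2⟩ | ⟨h0, h1, h2⟩
    · have : (fun i => eval (ptsS (k := k) i) (monomial d 1)) = US 0 := by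
        refine aux_funext6 ?_ ?_ ?_ ?_ ?_ ?_ <;>
          rw [aux_eval_monomial3, h0, h1, h2] <;> norm_num [ptsS, US]
      rw [this]; exact Submodule.subset_span ⟨0, rfl⟩
    · have : (fun i => eval (ptsS (k := k) i) (monomial d 1)) = US 1 := by
        refine aux_funext6 ?_ ?_ ?_ ?_ ?_ ?_ <;>
          rw [aux_eval_monomial3, h0, h1, h2] <;> norm_num [ptsS, US]
      rw [this]; exact Submodule.subset_span ⟨1, rfl⟩
    · have : (fun i => eval (ptsS (k := k) i) (monomial d 1)) = US 0 := by
        refine aux_funext6 ?_ ?_ ?_ ?_ ?_ ?_ <;>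
          rw [aux_eval_monomial3, h0, h1, h2] <;> norm_num [ptsS, US]
      rw [this]; exact Submodule.subset_span ⟨0, rfl⟩
    · have : (fun i => eval (ptsS (k := k) i) (monomial d 1)) = US 2 := by
        refine aux_funext6 ?_ ?_ ?_ ?_ ?_ ?_ <;>
          rw [aux_eval_monomial3, h0, h1, h2] <;> norm_num [ptsS, US]
      rw [this]; exact Submodule.subset_span ⟨2, rfl⟩
    · have : (fun i => eval (ptsS (k := k) i) (monomial d 1)) = US 3 := by
        refine aux_funext6 ?_ ?_ ?_ ?_ ?_ ?_ <;>
          rw [aux_eval_monomial3, h0, h1, h2] <;> norm_num [ptsS, US]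
      rw [this]; exact Submodule.subset_span ⟨3, rfl⟩
    · have : (fun i => eval (ptsS (k := k) i) (monomial d 1)) = US 4 := by
        refine aux_funext6 ?_ ?_ ?_ ?_ ?_ ?_ <;>
          rw [aux_eval_monomial3, h0, h1, h2] <;> norm_num [ptsS, US]
      rw [this]; exact Submodule.subset_span ⟨4, rfl⟩
  · rw [Submodule.span_le]
    rintro - ⟨j, rfl⟩
    revert j
    refine aux_fin5 _ ?_ ?_ ?_ ?_ ?_
    · exact ⟨⟨X 0 * X 0, (isHomogeneous_X k 0).mul (isHomogeneous_X k 0)⟩,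
        aux_funext6 (by norm_num [evL_apply, ptsS, US]) (by norm_num [evL_apply, ptsS, US])
          (by norm_num [evL_apply, ptsS, US]) (by norm_num [evL_apply, ptsS, US])
          (by norm_num [evL_apply, ptsS, US]) (by norm_num [evL_apply, ptsS, US])⟩
    · exact ⟨⟨X 0 * X 1, (isHomogeneous_X k 0).mul (isHomogeneous_X k 1)⟩,
        aux_funext6 (by norm_num [evL_apply, ptsS, US]) (by norm_num [evL_apply, ptsS, US])
          (by norm_num [evL_apply, ptsS, US]) (by norm_num [evL_apply, ptsS, US])
          (by norm_num [evL_apply, ptsS, US]) (by norm_num [evL_apply, ptsS, US])⟩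
    · exact ⟨⟨X 1 * X 1, (isHomogeneous_X k 1).mul (isHomogeneous_X k 1)⟩,
        aux_funext6 (by norm_num [evL_apply, ptsS, US]) (by norm_num [evL_apply, ptsS, US])
          (by norm_num [evL_apply, ptsS, US]) (by norm_num [evL_apply, ptsS, US])
          (by norm_num [evL_apply, ptsS, US]) (by norm_num [evL_apply, ptsS, US])⟩
    · exact ⟨⟨X 1 * X 2, (isHomogeneous_X k 1).mul (isHomogeneous_X k 2)⟩,
        aux_funext6 (by norm_num [evL_apply, ptsS, US]) (by norm_num [evL_apply, ptsS, US])
          (by norm_num [evL_apply, ptsS, US]) (by norm_num [evL_apply, ptsS, US])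
          (by norm_num [evL_apply, ptsS, US]) (by norm_num [evL_apply, ptsS, US])⟩
    · exact ⟨⟨X 2 * X 2, (isHomogeneous_X k 2).mul (isHomogeneous_X k 2)⟩,
        aux_funext6 (by norm_num [evL_apply, ptsS, US]) (by norm_num [evL_apply, ptsS, US])
          (by norm_num [evL_apply, ptsS, US]) (by norm_num [evL_apply, ptsS, US])
          (by norm_num [evL_apply, ptsS, US]) (by norm_num [evL_apply, ptsS, US])⟩

lemma rankS2 : finrank k (LinearMap.range (evL (ptsS (k := k)) 2)) = 5 := by
  rw [rangeS2]
  have hli : LinearIndependent k (US (k := k)) := by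
    rw [Fintype.linearIndependent_iff]
    intro g hg
    have e1 := congrFun hg 1
    have e2 := congrFun hg 2
    have e3 := congrFun hg 3
    have e4 := congrFun hg 4
    have e5 := congrFun hg 5
    simp [US, Fin.sum_univ_five] at e1 e2 e3 e4 e5
    refine aux_fin5 _ ?_ ?_ ?_ ?_ ?_
    · linear_combination -e4 + e5
    · linear_combination -e2 + e3 + e4 + -e5
    · linear_combination (1/2 : k) * e1 + -e2 + (1/2 : k) * e4
    · linear_combination (-1/2 : k) * e1 + (2 : k) * e2 + (-3/2 : k) * e4
    · linear_combination e4
  have h := finrank_span_eq_card hli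
  rw [h]
  simp

/-- Diagonal cubics for the standard points. -/
def fS3 : Fin 6 → R3 k :=
  ![X 1 * (X 1 - X 2) * (X 1 - C 2 * X 2),
    X 1 * (X 1 - X 2) * (X 1 - C 3 * X 2),
    (C 2 * X 0 + X 1 - C 3 * X 2) * (C 2 * X 0 + X 1 - C 2 * X 2) * X 1,
    X 0 * X 1 * X 2,
    (C 2 * X 0 + X 1 - C 3 * X 2) * (C 2 * X 0 + X 1 - C 2 * X 2) * (X 1 - X 2),
    X 0 * X 2 * (X 1 - X 2)]

lemma fS3_homog : ∀ i, fS3 (k := k) i ∈ homogeneousSubmodule (Fin 3) k 3 := by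
  have hX : ∀ j, (X j : R3 k) ∈ homogeneousSubmodule (Fin 3) k 1 :=
    fun j => isHomogeneous_X k j
  have hXX : ∀ j, (X 1 - X j : R3 k) ∈ homogeneousSubmodule (Fin 3) k 1 :=
    fun j => sub_mem (hX 1) (hX j)
  have hL : ∀ c : k, (X 1 - C c * X 2 : R3 k) ∈ homogeneousSubmodule (Fin 3) k 1 :=
    fun c => sub_mem (hX 1) ((isHomogeneous_C (Fin 3) c).mul (hX 2))
  have hM : ∀ c : k, (C 2 * X 0 + X 1 - C c * X 2 : R3 k) ∈
      homogeneousSubmodule (Fin 3) k 1 := fun c =>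
    sub_mem (add_mem ((isHomogeneous_C (Fin 3) (2 : k)).mul (hX 0)) (hX 1))
      ((isHomogeneous_C (Fin 3) c).mul (hX 2))
  refine aux_fin6 _ ?_ ?_ ?_ ?_ ?_ ?_
  · exact ((hX 1).mul (hXX 2)).mul (hL 2)
  · exact ((hX 1).mul (hXX 2)).mul (hL 3)
  · exact ((hM 3).mul (hM 2)).mul (hX 1)
  · exact ((hX 0).mul (hX 1)).mul (hX 2)
  · exact ((hM 3).mul (hM 2)).mul (hXX 2)
  · exact ((hX 0).mul (hX 2)).mul (hXX 2)

lemma surjS3 : Function.Surjective (evL (ptsS (k := k)) 3) := by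
  apply aux_surj_of_diag _ _ (fS3 (k := k)) fS3_homog
  · have key : ∀ i j : Fin 6, i ≠ j → eval (ptsS (k := k) j) (fS3 (k := k) i) = 0 := by
      refine aux_fin6 _ ?_ ?_ ?_ ?_ ?_ ?_ <;>
        refine aux_fin6 _ ?_ ?_ ?_ ?_ ?_ ?_ <;>
        intro hij <;>
        first
          | exact absurd rfl hij
          | norm_num [fS3, ptsS]
    exact key
  · refine aux_fin6 _ ?_ ?_ ?_ ?_ ?_ ?_ <;> norm_num [fS3, ptsS]

lemma surjS : ∀ t, 3 ≤ t → Function.Surjective (evL (ptsS (k := k)) t) := by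
  intro t ht
  induction t, ht using Nat.le_induction with
  | base => exact surjS3
  | succ n hn ih => exact aux_surj_step _ _ ptsS_z ih

lemma hilbS0 : hilb (radIdeal (SstdF (k := k))) 0 = 1 := by
  rw [aux_hilb_eq _ ptsS _ hS_S, aux_rank0]

lemma hilbS1 : hilb (radIdeal (SstdF (k := k))) 1 = 3 := by
  rw [aux_hilb_eq _ ptsS _ hS_S, rankS1]

lemma hilbS2 : hilb (radIdeal (SstdF (k := k))) 2 = 5 := by
  rw [aux_hilb_eq _ ptsS _ hS_S, rankS2]

lemma hilbS3 : ∀ t, 3 ≤ t → hilb (radIdeal (SstdF (k := k))) t = 6 := by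
  intro t ht
  rw [aux_hilb_eq _ ptsS _ hS_S, aux_surj_rank _ _ (surjS t ht)]

/-- Six points in general position on four lines. -/
def ptsG : Fin 6 → Fin 3 → k :=
  ![![0, 1, 1], ![1, 0, 1], ![2, 2, 1], ![2, 1, 1], ![3, 1, 1], ![3, 2, 1]]

/-- The finset of the six general points. -/
def SGF : Finset (Fin 3 → k) :=
  {![(0 : k), 1, 1], ![(1 : k), 0, 1], ![(2 : k), 2, 1], ![(2 : k), 1, 1],
    ![(3 : k), 1, 1], ![(3 : k), 2, 1]}

lemma ptsG_z : ∀ i, ptsG (k := k) i 2 = 1 := by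
  refine aux_fin6 _ ?_ ?_ ?_ ?_ ?_ ?_ <;> rfl

lemma hS_G (f : R3 k) :
    (∀ p ∈ SGF, eval p f = 0) ↔ ∀ i, eval (ptsG (k := k) i) f = 0 := by
  constructor
  · intro h
    refine aux_fin6 _ ?_ ?_ ?_ ?_ ?_ ?_ <;>
      exact h _ (by simp [SGF, ptsG])
  · intro h p hp
    simp only [SGF, Finset.mem_insert, Finset.mem_singleton] at hp
    rcases hp with rfl | rfl | rfl | rfl | rfl | rfl
    exacts [h 0, h 1, h 2, h 3, h 4, h 5]

lemma rankG1 : finrank k (LinearMap.range (evL (ptsG (k := k)) 1)) = 3 := by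
  rw [aux_range1]
  have hli : LinearIndependent k (fun j : Fin 3 => fun i => ptsG (k := k) i j) := by
    rw [Fintype.linearIndependent_iff]
    intro g hg
    have e0 := congrFun hg 0
    have e1 := congrFun hg 1
    have e2 := congrFun hg 2
    simp [ptsG, Fin.sum_univ_three] at e0 e1 e2
    refine aux_fin3 _ ?_ ?_ ?_
    · linear_combination (-2/3 : k) * e0 + (1/3 : k) * e1 + (1/3 : k) * e2
    · linear_combination (1/3 : k) * e0 + (-2/3 : k) * e1 + (1/3 : k) * e2
    · linear_combination (2/3 : k) * e0 + (2/3 : k) * e1 + (-1/3 : k) * e2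
  have h := finrank_span_eq_card hli
  rw [h]
  simp

/-- The six degree-2 evaluation vectors for the general points. -/
def UG : Fin 6 → Fin 6 → k :=
  ![![0, 1, 4, 4, 9, 9], ![0, 0, 4, 2, 3, 6], ![0, 1, 2, 2, 3, 3],
    ![1, 0, 4, 1, 1, 4], ![1, 0, 2, 1, 1, 2], ![1, 1, 1, 1, 1, 1]]

lemma surjG2 : Function.Surjective (evL (ptsG (k := k)) 2) := by
  have hsub : Submodule.span k (Set.range (UG (k := k))) ≤
      LinearMap.range (evL (ptsG (k := k)) 2) := by
    rw [Submodule.span_le]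
    rintro - ⟨j, rfl⟩
    revert j
    refine aux_fin6 _ ?_ ?_ ?_ ?_ ?_ ?_
    · exact ⟨⟨X 0 * X 0, (isHomogeneous_X k 0).mul (isHomogeneous_X k 0)⟩,
        aux_funext6 (by norm_num [evL_apply, ptsG, UG]) (by norm_num [evL_apply, ptsG, UG])
          (by norm_num [evL_apply, ptsG, UG]) (by norm_num [evL_apply, ptsG, UG])
          (by norm_num [evL_apply, ptsG, UG]) (by norm_num [evL_apply, ptsG, UG])⟩
    · exact ⟨⟨X 0 * X 1, (isHomogeneous_X k 0).mul (isHomogeneous_X k 1)⟩,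
        aux_funext6 (by norm_num [evL_apply, ptsG, UG]) (by norm_num [evL_apply, ptsG, UG])
          (by norm_num [evL_apply, ptsG, UG]) (by norm_num [evL_apply, ptsG, UG])
          (by norm_num [evL_apply, ptsG, UG]) (by norm_num [evL_apply, ptsG, UG])⟩
    · exact ⟨⟨X 0 * X 2, (isHomogeneous_X k 0).mul (isHomogeneous_X k 2)⟩,
        aux_funext6 (by norm_num [evL_apply, ptsG, UG]) (by norm_num [evL_apply, ptsG, UG])
          (by norm_num [evL_apply, ptsG, UG]) (by norm_num [evL_apply, ptsG, UG])
          (by norm_num [evL_apply, ptsG, UG]) (by norm_num [evL_apply, ptsG, UG])⟩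
    · exact ⟨⟨X 1 * X 1, (isHomogeneous_X k 1).mul (isHomogeneous_X k 1)⟩,
        aux_funext6 (by norm_num [evL_apply, ptsG, UG]) (by norm_num [evL_apply, ptsG, UG])
          (by norm_num [evL_apply, ptsG, UG]) (by norm_num [evL_apply, ptsG, UG])
          (by norm_num [evL_apply, ptsG, UG]) (by norm_num [evL_apply, ptsG, UG])⟩
    · exact ⟨⟨X 1 * X 2, (isHomogeneous_X k 1).mul (isHomogeneous_X k 2)⟩,
        aux_funext6 (by norm_num [evL_apply, ptsG, UG]) (by norm_num [evL_apply, ptsG, UG])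
          (by norm_num [evL_apply, ptsG, UG]) (by norm_num [evL_apply, ptsG, UG])
          (by norm_num [evL_apply, ptsG, UG]) (by norm_num [evL_apply, ptsG, UG])⟩
    · exact ⟨⟨X 2 * X 2, (isHomogeneous_X k 2).mul (isHomogeneous_X k 2)⟩,
        aux_funext6 (by norm_num [evL_apply, ptsG, UG]) (by norm_num [evL_apply, ptsG, UG])
          (by norm_num [evL_apply, ptsG, UG]) (by norm_num [evL_apply, ptsG, UG])
          (by norm_num [evL_apply, ptsG, UG]) (by norm_num [evL_apply, ptsG, UG])⟩
  have hli : LinearIndependent k (UG (k := k)) := by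
    rw [Fintype.linearIndependent_iff]
    intro g hg
    have e0 := congrFun hg 0
    have e1 := congrFun hg 1
    have e2 := congrFun hg 2
    have e3 := congrFun hg 3
    have e4 := congrFun hg 4
    have e5 := congrFun hg 5
    simp [UG, Fin.sum_univ_six] at e0 e1 e2 e3 e4 e5
    refine aux_fin6 _ ?_ ?_ ?_ ?_ ?_ ?_
    · linear_combination (1/6 : k) * e0 + (-1/2 : k) * e3 + (1/3 : k) * e4
    · linear_combination -e2 + e3 + -e4 + e5
    · linear_combination (-5/6 : k) * e0 + e2 + (1/2 : k) * e3 + (1/3 : k) * e4 + -e5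
    · linear_combination (-1/6 : k) * e0 + (1/2 : k) * e1 + e2 + (-3/2 : k) * e3 +
        (2/3 : k) * e4 + (-1/2 : k) * e5
    · linear_combination (1/2 : k) * e0 + (-3/2 : k) * e1 + (3/2 : k) * e3 + (-1/2 : k) * e5
    · linear_combination (2/3 : k) * e0 + e1 + -e2 + (-2/3 : k) * e4 + e5
  have hspan := finrank_span_eq_card hli
  have hge : 6 ≤ finrank k (LinearMap.range (evL (ptsG (k := k)) 2)) := by
    have := Submodule.finrank_mono hsub
    rw [hspan] at this
    simpa using this
  have hle : finrank k (LinearMap.range (evL (ptsG (k := k)) 2)) ≤ 6 := by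
    have := Submodule.finrank_le (LinearMap.range (evL (ptsG (k := k)) 2))
    simpa using this
  have htop : LinearMap.range (evL (ptsG (k := k)) 2) = ⊤ := by
    apply Submodule.eq_top_of_finrank_eq
    simp only [show finrank k (LinearMap.range (evL (ptsG (k := k)) 2)) = 6 by omega]
    simp
  exact LinearMap.range_eq_top.mp htop

lemma surjG : ∀ t, 2 ≤ t → Function.Surjective (evL (ptsG (k := k)) t) := by
  intro t ht
  induction t, ht using Nat.le_induction with
  | base => exact surjG2
  | succ n hn ih => exact aux_surj_step _ _ ptsG_z ih

lemma hilbG0 : hilb (radIdeal (SGF (k := k))) 0 = 1 := by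
  rw [aux_hilb_eq _ ptsG _ hS_G, aux_rank0]

lemma hilbG1 : hilb (radIdeal (SGF (k := k))) 1 = 3 := by
  rw [aux_hilb_eq _ ptsG _ hS_G, rankG1]

lemma hilbG2plus : ∀ t, 2 ≤ t → hilb (radIdeal (SGF (k := k))) t = 6 := by
  intro t ht
  rw [aux_hilb_eq _ ptsG _ hS_G, aux_surj_rank _ _ (surjG t ht)]

/-- Lines of the standard configuration. -/
def lineS : ℕ → Fin 3 → k := fun i =>
  if i = 0 then ![0, 1, -3] else if i = 1 then ![0, 1, -2]
  else if i = 2 then ![0, 1, -1] else ![0, 1, 0]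

/-- Groups of points of the standard configuration. -/
def XcS : ℕ → Finset (Fin 3 → k) := fun i =>
  if i = 0 then {![0, 3, 1]} else if i = 1 then {![0, 2, 1]}
  else if i = 2 then {![0, 1, 1], ![1, 1, 1]} else {![0, 0, 1], ![1, 0, 1]}

/-- Lines of the general configuration. -/
def lineG : ℕ → Fin 3 → k := fun i =>
  if i = 0 then ![1, 0, 0] else if i = 1 then ![1, 0, -1]
  else if i = 2 then ![1, 0, -2] else ![1, 0, -3]

/-- Groups of points of the general configuration. -/
def XcG : ℕ → Finset (Fin 3 → k) := fun i =>
  if i = 0 then {![0, 1, 1]} else if i = 1 then {![1, 0, 1]}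
  else if i = 2 then {![2, 2, 1], ![2, 1, 1]} else {![3, 1, 1], ![3, 2, 1]}

lemma pseudoS : PseudoConfig 4 (fun i => i / 2 + 1) (lineS (k := k)) (XcS (k := k)) := by
  refine ⟨?_, ?_, ?_, ?_, ?_⟩
  · intro i hi h
    interval_cases i <;>
      · have := congrFun h 1
        norm_num [lineS] at this
  · intro i j hi hj hne
    interval_cases i <;> interval_cases j <;>
      first
        | exact absurd rfl hne
        | exact aux_not_sameProj_coord 1 2 (by norm_num [lineS]) (by norm_num [lineS])
            (by norm_num [lineS])
  · intro i hi
    interval_cases i <;> constructor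
    · norm_num [XcS]
    · refine aux_good_z1 ?_
      intro p hp
      simp only [XcS] at hp
      norm_num at hp
      subst hp; rfl
    · norm_num [XcS]
    · refine aux_good_z1 ?_
      intro p hp
      simp only [XcS] at hp
      norm_num at hp
      subst hp; rfl
    · rw [show XcS (k := k) 2 = {![0, 1, 1], ![1, 1, 1]} from rfl,
        Finset.card_insert_of_notMem (by
          simp only [Finset.mem_singleton]
          intro h; have := congrFun h 0; norm_num at this), Finset.card_singleton]
    · refine aux_good_z1 ?_
      intro p hp
      simp only [XcS] at hp
      norm_num [Finset.mem_insert] at hp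
      rcases hp with rfl | rfl <;> rfl
    · rw [show XcS (k := k) 3 = {![0, 0, 1], ![1, 0, 1]} from rfl,
        Finset.card_insert_of_notMem (by
          simp only [Finset.mem_singleton]
          intro h; have := congrFun h 0; norm_num at this), Finset.card_singleton]
    · refine aux_good_z1 ?_
      intro p hp
      simp only [XcS] at hp
      norm_num [Finset.mem_insert] at hp
      rcases hp with rfl | rfl <;> rfl
  · intro i hi q hq
    interval_cases i <;>
      simp only [XcS] at hq <;> norm_num [Finset.mem_insert] at hq
    · subst hq; norm_num [onLine, lineS, Fin.sum_univ_three]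
    · subst hq; norm_num [onLine, lineS, Fin.sum_univ_three]
    · rcases hq with rfl | rfl <;> norm_num [onLine, lineS, Fin.sum_univ_three]
    · rcases hq with rfl | rfl <;> norm_num [onLine, lineS, Fin.sum_univ_three]
  · intro i j hi hj hne q hq
    interval_cases i <;>
      (simp only [XcS] at hq; norm_num [Finset.mem_insert] at hq) <;>
      interval_cases j <;>
      first
        | exact absurd rfl hne
        | (subst hq; intro hcon; norm_num [onLine, lineS, Fin.sum_univ_three] at hcon)
        | (rcases hq with rfl | rfl <;>
            · intro hcon; norm_num [onLine, lineS, Fin.sum_univ_three] at hcon)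

lemma pseudoG : PseudoConfig 4 (fun i => i / 2 + 1) (lineG (k := k)) (XcG (k := k)) := by
  refine ⟨?_, ?_, ?_, ?_, ?_⟩
  · intro i hi h
    interval_cases i <;>
      · have := congrFun h 0
        norm_num [lineG] at this
  · intro i j hi hj hne
    interval_cases i <;> interval_cases j <;>
      first
        | exact absurd rfl hne
        | exact aux_not_sameProj_coord 0 2 (by norm_num [lineG]) (by norm_num [lineG])
            (by norm_num [lineG])
  · intro i hi
    interval_cases i <;> constructor
    · norm_num [XcG]
    · refine aux_good_z1 ?_
      intro p hp
      simp only [XcG] at hp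
      norm_num at hp
      subst hp; rfl
    · norm_num [XcG]
    · refine aux_good_z1 ?_
      intro p hp
      simp only [XcG] at hp
      norm_num at hp
      subst hp; rfl
    · rw [show XcG (k := k) 2 = {![2, 2, 1], ![2, 1, 1]} from rfl,
        Finset.card_insert_of_notMem (by
          simp only [Finset.mem_singleton]
          intro h; have := congrFun h 1; norm_num at this), Finset.card_singleton]
    · refine aux_good_z1 ?_
      intro p hp
      simp only [XcG] at hp
      norm_num [Finset.mem_insert] at hp
      rcases hp with rfl | rfl <;> rfl
    · rw [show XcG (k := k) 3 = {![3, 1, 1], ![3, 2, 1]} from rfl,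
        Finset.card_insert_of_notMem (by
          simp only [Finset.mem_singleton]
          intro h; have := congrFun h 1; norm_num at this), Finset.card_singleton]
    · refine aux_good_z1 ?_
      intro p hp
      simp only [XcG] at hp
      norm_num [Finset.mem_insert] at hp
      rcases hp with rfl | rfl <;> rfl
  · intro i hi q hq
    interval_cases i <;>
      simp only [XcG] at hq <;> norm_num [Finset.mem_insert] at hq
    · subst hq; norm_num [onLine, lineG, Fin.sum_univ_three]
    · subst hq; norm_num [onLine, lineG, Fin.sum_univ_three]
    · rcases hq with rfl | rfl <;> norm_num [onLine, lineG, Fin.sum_univ_three]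
    · rcases hq with rfl | rfl <;> norm_num [onLine, lineG, Fin.sum_univ_three]
  · intro i j hi hj hne q hq
    interval_cases i <;>
      (simp only [XcG] at hq; norm_num [Finset.mem_insert] at hq) <;>
      interval_cases j <;>
      first
        | exact absurd rfl hne
        | (subst hq; intro hcon; norm_num [onLine, lineG, Fin.sum_univ_three] at hcon)
        | (rcases hq with rfl | rfl <;>
            · intro hcon; norm_num [onLine, lineG, Fin.sum_univ_three] at hcon)

lemma aux_pcRad_eq (Xc : ℕ → Finset (Fin 3 → k)) (S : Finset (Fin 3 → k))
    (h : ∀ p, p ∈ S ↔ ∃ i ∈ Finset.range 4, p ∈ Xc i) :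
    pcRad 4 Xc = radIdeal S := by
  unfold pcRad radIdeal
  ext f
  simp only [Ideal.mem_iInf]
  constructor
  · intro hf p hp
    obtain ⟨i, hi, hpi⟩ := (h p).mp hp
    exact hf i hi p hpi
  · intro hf i hi p hp
    exact hf p ((h p).mpr ⟨i, hi, hp⟩)

lemma pcRadS : pcRad 4 (XcS (k := k)) = radIdeal (SstdF (k := k)) := by
  apply aux_pcRad_eq
  intro p
  constructor
  · intro hp
    simp only [SstdF, Finset.mem_insert, Finset.mem_singleton] at hp
    rcases hp with rfl | rfl | rfl | rfl | rfl | rfl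
    · exact ⟨0, by norm_num, by norm_num [XcS]⟩
    · exact ⟨1, by norm_num, by norm_num [XcS]⟩
    · exact ⟨2, by norm_num, by norm_num [XcS]⟩
    · exact ⟨2, by norm_num, by norm_num [XcS]⟩
    · exact ⟨3, by norm_num, by norm_num [XcS]⟩
    · exact ⟨3, by norm_num, by norm_num [XcS]⟩
  · rintro ⟨i, hi, hp⟩
    simp only [Finset.mem_range] at hi
    interval_cases i <;> simp only [XcS] at hp <;> norm_num [Finset.mem_insert] at hp
    · subst hp; simp [SstdF]
    · subst hp; simp [SstdF]
    · rcases hp with rfl | rfl <;> simp [SstdF]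
    · rcases hp with rfl | rfl <;> simp [SstdF]

lemma pcRadG : pcRad 4 (XcG (k := k)) = radIdeal (SGF (k := k)) := by
  apply aux_pcRad_eq
  intro p
  constructor
  · intro hp
    simp only [SGF, Finset.mem_insert, Finset.mem_singleton] at hp
    rcases hp with rfl | rfl | rfl | rfl | rfl | rfl
    · exact ⟨0, by norm_num, by norm_num [XcG]⟩
    · exact ⟨1, by norm_num, by norm_num [XcG]⟩
    · exact ⟨2, by norm_num, by norm_num [XcG]⟩
    · exact ⟨2, by norm_num, by norm_num [XcG]⟩
    · exact ⟨3, by norm_num, by norm_num [XcG]⟩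
    · exact ⟨3, by norm_num, by norm_num [XcG]⟩
  · rintro ⟨i, hi, hp⟩
    simp only [Finset.mem_range] at hi
    interval_cases i <;> simp only [XcG] at hp <;> norm_num [Finset.mem_insert] at hp
    · subst hp; simp [SGF]
    · subst hp; simp [SGF]
    · rcases hp with rfl | rfl <;> simp [SGF]
    · rcases hp with rfl | rfl <;> simp [SGF]

end Configs

end Stmt13Aux

/-- the pseudo type vector `(1,1,2,2)` admits two pseudo linear
configurations with different Hilbert functions: the standard one has Hilbert
function `(1,3,5,6,6,…)`, while generically chosen points give six points in
general position with Hilbert function `(1,3,6,6,…)`. -/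
theorem stmt13 [CharZero k] [DecidableEq k] :
    let Sstd : Finset (Fin 3 → k) :=
      {![(0 : k), 3, 1], ![(0 : k), 2, 1], ![(0 : k), 1, 1], ![(1 : k), 1, 1],
        ![(0 : k), 0, 1], ![(1 : k), 0, 1]}
    let m : ℕ → ℕ := fun i => i / 2 + 1
    (∃ (ℓ : ℕ → (Fin 3 → k)) (Xc : ℕ → Finset (Fin 3 → k)),
        PseudoConfig 4 m ℓ Xc ∧ pcRad 4 Xc = radIdeal Sstd) ∧
    hilb (radIdeal Sstd) 0 = 1 ∧ hilb (radIdeal Sstd) 1 = 3 ∧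
    hilb (radIdeal Sstd) 2 = 5 ∧ (∀ t, 3 ≤ t → hilb (radIdeal Sstd) t = 6) ∧
    (∃ (ℓ' : ℕ → (Fin 3 → k)) (Xc' : ℕ → Finset (Fin 3 → k)),
        PseudoConfig 4 m ℓ' Xc' ∧
        ∀ t, hilb (pcRad 4 Xc') t = min ((t + 2).choose 2) 6) := by
  intro Sstd m
  refine ⟨⟨lineS, XcS, pseudoS, pcRadS⟩, hilbS0, hilbS1, hilbS2, hilbS3,
    lineG, XcG, pseudoG, ?_⟩
  intro t
  rw [pcRadG]
  match t with
  | 0 => rw [hilbG0]; norm_num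
  | 1 => rw [hilbG1]; norm_num [Nat.choose]
  | (n + 2) =>
    rw [hilbG2plus (n + 2) (by omega)]
    have h6 : 6 ≤ (n + 2 + 2).choose 2 := by
      calc (6 : ℕ) = Nat.choose 4 2 := by norm_num [Nat.choose]
        _ ≤ (n + 2 + 2).choose 2 := Nat.choose_le_choose 2 (by omega)
    exact (min_eq_right h6).symm

end
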